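/- Let A and A' be affine point sets in general position on S² with |A| = |A'|, and let p, q ∈ A be distinct. For any p', q' ∈ A' there is at most one orientation preserving bijection f : A → A' with f(p) = p' and f(q) = q'. In particular, a symmetry of A fixing two distinct points is the identity. -/

import Mathlib

open scoped RealInnerProductSpace

noncomputable section

abbrev E3 := EuclideanSpace ℝ (Fin 3)

/-- Determinant of the 3×3 matrix whose rows are `p`, `q`, `r`. -/
def det3 (p q r : E3) : ℝ := Matrix.det (Matrix.of ![fun i => p i, fun i => q i, fun i => r i])

/-- The orientation `sgn(p,q,r)` of a triple of points: the sign of `det3 p q r`. -/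
def sgn3 (p q r : E3) : ℝ := Real.sign (det3 p q r)

/-- An affine set: a finite subset of the unit sphere contained in an open hemisphere. -/
def IsAffineSet (A : Set E3) : Prop :=
  A.Finite ∧ A ⊆ Metric.sphere (0 : E3) 1 ∧ ∃ v : E3, ∀ p ∈ A, 0 < ⟪v, p⟫

/-- General position for an affine set: no three of its points are coplanar with the origin. -/
def GenPos (A : Set E3) : Prop :=
  ∀ p ∈ A, ∀ q ∈ A, ∀ r ∈ A, p ≠ q → p ≠ r → q ≠ r → det3 p q r ≠ 0

/-- `p` is extreme in `A`: some great circle strictly separates `p` from `A \ {p}`. -/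
def IsExtremePt (p : E3) (A : Set E3) : Prop :=
  ∃ v : E3, 0 < ⟪v, p⟫ ∧ ∀ q ∈ A, q ≠ p → ⟪v, q⟫ < 0

/-- `f` preserves orientations on `S`. -/
def OrientationPreservingOn (f : E3 → E3) (S : Set E3) : Prop :=
  ∀ p ∈ S, ∀ q ∈ S, ∀ r ∈ S, sgn3 (f p) (f q) (f r) = sgn3 p q r

-- Auxiliary lemmas -------------------------------------------------------

lemma det3_expand (p q r : E3) :
    det3 p q r = p 0 * q 1 * r 2 - p 0 * q 2 * r 1 - p 1 * q 0 * r 2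
      + p 1 * q 2 * r 0 + p 2 * q 0 * r 1 - p 2 * q 1 * r 0 := by
  simp [det3, Matrix.det_fin_three]

lemma det3_self₂₃ (p q : E3) : det3 p q q = 0 := by
  simp [det3_expand]; ring

lemma det3_swap₂₃ (p q r : E3) : det3 p r q = - det3 p q r := by
  simp [det3_expand]; ring

lemma det3_swap₁₂ (p q r : E3) : det3 q p r = - det3 p q r := by
  simp [det3_expand]; ring

lemma pluecker (a b x y z : E3) :
    det3 a b x * det3 a y z - det3 a b y * det3 a x z + det3 a b z * det3 a x y = 0 := by
  simp [det3_expand]; ring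

lemma pos_of_sign_eq {u v : ℝ} (h : Real.sign u = Real.sign v) (hv : 0 < v) : 0 < u := by
  rw [Real.sign_of_pos hv] at h
  rcases lt_trichotomy u 0 with h0 | h0 | h0
  · rw [Real.sign_of_neg h0] at h; norm_num at h
  · rw [h0, Real.sign_zero] at h; norm_num at h
  · exact h0

/-- A permutation of a finite set preserving a transitive total irreflexive relation
is the identity. -/
lemma perm_of_order_id {α : Type*} [Nonempty α] {S : Set α} (hS : S.Finite) {r : α → α → Prop}
    (hirr : ∀ x ∈ S, ¬ r x x)
    (htot : ∀ x ∈ S, ∀ y ∈ S, x ≠ y → r x y ∨ r y x)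
    (htrans : ∀ x ∈ S, ∀ y ∈ S, ∀ z ∈ S, r x y → r y z → r x z)
    {f : α → α} (hmaps : Set.MapsTo f S S) (hinj : Set.InjOn f S)
    (hmono : ∀ x ∈ S, ∀ y ∈ S, r x y → r (f x) (f y)) :
    ∀ x ∈ S, f x = x := by
  classical
  set T : Finset α := hS.toFinset with hT
  have hmemT : ∀ x, x ∈ T ↔ x ∈ S := fun x => hS.mem_toFinset
  set d : α → ℕ := fun x => (T.filter (fun y => r y x)).card with hd
  have hbij : Set.BijOn f S S := (hS.injOn_iff_bijOn_of_mapsTo hmaps).mp hinj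
  -- d x ≤ d (f x) for x ∈ S
  have hle : ∀ x ∈ S, d x ≤ d (f x) := by
    intro x hx
    apply Finset.card_le_card_of_injOn f
    · intro y hy
      rw [Finset.mem_coe, Finset.mem_filter] at hy ⊢
      exact ⟨(hmemT _).2 (hmaps ((hmemT _).1 hy.1)),
        hmono y ((hmemT _).1 hy.1) x hx hy.2⟩
    · intro a ha b hb hab
      exact hinj ((hmemT _).1 (Finset.mem_filter.mp ha).1)
        ((hmemT _).1 (Finset.mem_filter.mp hb).1) hab
  -- sums are equal since f permutes S
  have hsum : ∑ x ∈ T, d (f x) = ∑ x ∈ T, d x := by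
    apply Finset.sum_nbij' (i := f) (j := Function.invFunOn f S)
    · intro a ha; exact (hmemT _).2 (hmaps ((hmemT _).1 ha))
    · intro a ha; exact (hmemT _).2 (hbij.surjOn.mapsTo_invFunOn ((hmemT _).1 ha))
    · intro a ha; exact hbij.invOn_invFunOn.1 ((hmemT _).1 ha)
    · intro a ha; exact hbij.invOn_invFunOn.2 ((hmemT _).1 ha)
    · intro a _; rfl
  have heq : ∀ x ∈ S, d x = d (f x) := by
    intro x hx
    have := (Finset.sum_eq_sum_iff_of_le (fun i hi => hle i ((hmemT _).1 hi))).mp hsum.symm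
    exact this x ((hmemT _).2 hx)
  -- rank determines the element
  intro x hx
  by_contra hne
  have hfx : f x ∈ S := hmaps hx
  have key : ∀ u ∈ S, ∀ v ∈ S, r u v → d u < d v := by
    intro u hu v hv huv
    apply Finset.card_lt_card
    constructor
    · intro y hy
      rw [Finset.mem_filter] at hy ⊢
      exact ⟨hy.1, htrans y ((hmemT _).1 hy.1) u hu v hv hy.2 huv⟩
    · intro hsub
      have hu' : u ∈ T.filter (fun y => r y v) :=
        Finset.mem_filter.mpr ⟨(hmemT _).2 hu, huv⟩
      have := Finset.mem_filter.mp (hsub hu')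
      exact hirr u hu this.2
  rcases htot x hx (f x) hfx (fun h => hne h.symm) with h | h
  · exact absurd (heq x hx) (Nat.ne_of_lt (key x hx (f x) hfx h))
  · exact absurd (heq x hx).symm (Nat.ne_of_lt (key (f x) hfx x hx h))

/-- Points strictly on the positive side of the plane through `0, a, b` are fixed by an
orientation preserving symmetry of `A` fixing `a` and `b`. -/
lemma fixed_on_side (A : Set E3) (hfin : A.Finite) (hgp : GenPos A)
    (a b : E3) (ha : a ∈ A) (hb : b ∈ A)
    (f : E3 → E3) (hbij : Set.BijOn f A A) (hop : OrientationPreservingOn f A)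
    (hfa : f a = a) (hfb : f b = b) :
    ∀ x ∈ A, 0 < det3 a b x → f x = x := by
  intro x hx hxpos
  set S : Set E3 := {z ∈ A | 0 < det3 a b z} with hSdef
  have hSsub : S ⊆ A := fun z hz => hz.1
  have hSfin : S.Finite := hfin.subset hSsub
  have haS : a ∉ S := by
    intro h
    have h2 : (0:ℝ) < det3 a b a := h.2
    have : det3 a b a = 0 := by rw [det3_swap₁₂, det3_self₂₃]; ring
    rw [this] at h2; exact lt_irrefl 0 h2
  have hbS : b ∉ S := fun h => by
    have h2 : (0:ℝ) < det3 a b b := h.2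
    rw [det3_self₂₃] at h2; exact lt_irrefl 0 h2
  have hirr : ∀ z ∈ S, ¬ (0 < det3 a z z) := by
    intro z _ h; rw [det3_self₂₃] at h; exact lt_irrefl 0 h
  have hne_a : ∀ z ∈ S, z ≠ a := fun z hz h => haS (h ▸ hz)
  have htot : ∀ u ∈ S, ∀ v ∈ S, u ≠ v → 0 < det3 a u v ∨ 0 < det3 a v u := by
    intro u hu v hv huv
    have hnz : det3 a u v ≠ 0 :=
      hgp a ha u hu.1 v hv.1 (fun h => hne_a u hu h.symm) (fun h => hne_a v hv h.symm) huv
    rcases hnz.lt_or_gt with h | h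
    · right; rw [det3_swap₂₃]; linarith
    · left; exact h
  have htrans : ∀ u ∈ S, ∀ v ∈ S, ∀ w ∈ S,
      0 < det3 a u v → 0 < det3 a v w → 0 < det3 a u w := by
    intro u hu v hv w hw huv hvw
    have hid := pluecker a b u v w
    have h1 : 0 < det3 a b v * det3 a u w := by
      nlinarith [mul_pos hu.2 hvw, mul_pos hw.2 huv]
    by_contra hle
    push_neg at hle
    nlinarith [mul_nonpos_of_nonneg_of_nonpos hv.2.le hle]
  have hmaps : Set.MapsTo f S S := by
    intro z hz
    refine ⟨hbij.mapsTo hz.1, ?_⟩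
    have hs : sgn3 (f a) (f b) (f z) = sgn3 a b z := hop a ha b hb z hz.1
    rw [hfa, hfb] at hs
    exact pos_of_sign_eq hs hz.2
  have hinj : Set.InjOn f S := hbij.injOn.mono hSsub
  have hmono : ∀ u ∈ S, ∀ v ∈ S, 0 < det3 a u v → 0 < det3 a (f u) (f v) := by
    intro u hu v hv huv
    have hs : sgn3 (f a) (f u) (f v) = sgn3 a u v := hop a ha u hu.1 v hv.1
    rw [hfa] at hs
    exact pos_of_sign_eq hs huv
  exact perm_of_order_id hSfin hirr htot htrans hmaps hinj hmono x ⟨hx, hxpos⟩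

/-- A symmetry of a finite general-position set fixing two distinct points is the identity. -/
lemma symmetry_fixing_two (A : Set E3) (hfin : A.Finite) (hgp : GenPos A)
    (p q : E3) (hp : p ∈ A) (hq : q ∈ A) (hpq : p ≠ q)
    (f : E3 → E3) (hbij : Set.BijOn f A A) (hop : OrientationPreservingOn f A)
    (hfp : f p = p) (hfq : f q = q) : Set.EqOn f id A := by
  intro x hx
  simp only [id]
  by_cases hxp : x = p
  · rw [hxp]; exact hfp
  by_cases hxq : x = q
  · rw [hxq]; exact hfq
  have hnz : det3 p q x ≠ 0 := hgp p hp q hq x hx hpq (Ne.symm hxp) (Ne.symm hxq)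
  rcases hnz.lt_or_gt with h | h
  · -- det3 q p x > 0
    have h' : 0 < det3 q p x := by rw [det3_swap₁₂]; linarith
    exact fixed_on_side A hfin hgp q p hq hp f hbij hop hfq hfp x hx h'
  · exact fixed_on_side A hfin hgp p q hp hq f hbij hop hfp hfq x hx h

/-- For affine sets `A, A'` in general position of equal size and distinct
points `p, q ∈ A`, for any `p', q' ∈ A'` there is at most one orientation preserving
bijection `f : A → A'` with `f p = p'` and `f q = q'`. In particular a symmetry of `A`
fixing the two distinct points `p` and `q` is the identity on `A`. -/
theorem stmt7 (A A' : Set E3) (hA : IsAffineSet A) (hA' : IsAffineSet A')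
    (hgp : GenPos A) (hgp' : GenPos A') (hcard : A.ncard = A'.ncard)
    (p q : E3) (hp : p ∈ A) (hq : q ∈ A) (hpq : p ≠ q) :
    (∀ p' q' : E3, p' ∈ A' → q' ∈ A' →
      ∀ f g : E3 → E3, Set.BijOn f A A' → OrientationPreservingOn f A →
        Set.BijOn g A A' → OrientationPreservingOn g A →
        f p = p' → f q = q' → g p = p' → g q = q' → Set.EqOn f g A) ∧
    (∀ f : E3 → E3, Set.BijOn f A A → OrientationPreservingOn f A →
      f p = p → f q = q → Set.EqOn f id A) := by
  have hfin : A.Finite := hA.1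
  constructor
  · intro p' q' hp' hq' f g hfbij hfop hgbij hgop hfp hfq hgp0 hgq0
    classical
    set g' : E3 → E3 := Function.invFunOn g A with hg'
    have hinv : Set.InvOn g' g A A' := hgbij.invOn_invFunOn
    have hg'maps : Set.MapsTo g' A' A := hgbij.surjOn.mapsTo_invFunOn
    have hgg' : ∀ u ∈ A', g (g' u) = u := fun u hu => hinv.2 hu
    have hg'g : ∀ u ∈ A, g' (g u) = u := fun u hu => hinv.1 hu
    set h : E3 → E3 := fun x => g' (f x) with hh
    have hg'bij : Set.BijOn g' A' A := Set.BijOn.symm ⟨hinv.2, hinv.1⟩ hgbij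
    have hhbij : Set.BijOn h A A := hg'bij.comp hfbij
    have hhop : OrientationPreservingOn h A := by
      intro x hx y hy z hz
      have hfx := hfbij.mapsTo hx
      have hfy := hfbij.mapsTo hy
      have hfz := hfbij.mapsTo hz
      have h1 : sgn3 (g (g' (f x))) (g (g' (f y))) (g (g' (f z)))
          = sgn3 (g' (f x)) (g' (f y)) (g' (f z)) :=
        hgop _ (hg'maps hfx) _ (hg'maps hfy) _ (hg'maps hfz)
      rw [hgg' _ hfx, hgg' _ hfy, hgg' _ hfz] at h1
      rw [hh]
      simp only
      rw [← h1]
      exact hfop x hx y hy z hz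
    have hhp : h p = p := by
      rw [hh]; simp only; rw [hfp, ← hgp0, hg'g p hp]
    have hhq : h q = q := by
      rw [hh]; simp only; rw [hfq, ← hgq0, hg'g q hq]
    have hid := symmetry_fixing_two A hfin hgp p q hp hq hpq h hhbij hhop hhp hhq
    intro x hx
    have hx' : h x = x := hid hx
    have : g (g' (f x)) = g x := by rw [hh] at hx'; simp only at hx'; rw [hx']
    rw [hgg' _ (hfbij.mapsTo hx)] at this
    exact this
  · intro f hbij hop hfp hfq
    exact symmetry_fixing_two A hfin hgp p q hp hq hpq f hbij hop hfp hfq
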